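/- Let U, V ⊆ ℝⁿ be open neighbourhoods of 0, let f : U → V be a homeomorphism with f(0) = 0 such that its inverse f⁻¹ : V → U is η-quasisymmetric, and let D : U → D(U) be a homeomorphism with D(0) = 0 whose image D(U) is a neighbourhood of 0. If f ∼ D as x → 0, then f⁻¹ ∼ D⁻¹ as y → 0; that is, for every ε > 0 there is δ > 0 such that |f⁻¹(y) − D⁻¹(y)| ≤ ε(|f⁻¹(y)| + |D⁻¹(y)|) whenever |y| < δ. -/

import Mathlib

open Filter Topology Set

/-- Lemma 3.6: let `f : U → V` be a homeomorphism between neighbourhoods of `0` with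
`f(0) = 0` whose inverse is `η`-quasisymmetric, and let `D : U → D(U)` be a homeomorphism
with `D(0) = 0` whose image is a neighbourhood of `0`. If `f ∼ D` as `x → 0`, then
`f⁻¹ ∼ D⁻¹` as `y → 0`. -/
theorem inverse_sim {n : ℕ} (η : ℝ → ℝ)
    (hη_mono : StrictMonoOn η (Set.Ici 0))
    (hη_cont : ContinuousOn η (Set.Ici 0))
    (hη_bij : Set.BijOn η (Set.Ici 0) (Set.Ici 0))
    (U V W : Set (EuclideanSpace ℝ (Fin n)))
    (hU : IsOpen U) (hV : IsOpen V)
    (h0U : (0 : EuclideanSpace ℝ (Fin n)) ∈ U) (h0V : (0 : EuclideanSpace ℝ (Fin n)) ∈ V)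
    (f finv D Dinv : EuclideanSpace ℝ (Fin n) → EuclideanSpace ℝ (Fin n))
    (hf0 : f 0 = 0) (hfUV : f '' U = V)
    (hf_cont : ContinuousOn f U) (hf_inj : Set.InjOn f U)
    (hfinv_left : ∀ x ∈ U, finv (f x) = x) (hfinv_right : ∀ y ∈ V, f (finv y) = y)
    (hfinv_cont : ContinuousOn finv V)
    (hqs : ∀ x y z, x ∈ V → y ∈ V → z ∈ V → x ≠ z →
      ‖finv x - finv y‖ ≤ η (‖x - y‖ / ‖x - z‖) * ‖finv x - finv z‖)
    (hD0 : D 0 = 0) (hD_cont : ContinuousOn D U) (hD_inj : Set.InjOn D U)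
    (hW : W = D '' U) (hWnbhd : W ∈ nhds (0 : EuclideanSpace ℝ (Fin n)))
    (hDinv_left : ∀ x ∈ U, Dinv (D x) = x) (hDinv_right : ∀ y ∈ W, D (Dinv y) = y)
    (hDinv_cont : ContinuousOn Dinv W)
    (hsim : ∀ ε > (0 : ℝ), ∃ δ > (0 : ℝ), ∀ x ∈ U, ‖x‖ < δ →
      ‖f x - D x‖ ≤ ε * (‖f x‖ + ‖D x‖)) :
    ∀ ε > (0 : ℝ), ∃ δ > (0 : ℝ), ∀ y : EuclideanSpace ℝ (Fin n), ‖y‖ < δ →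
      ‖finv y - Dinv y‖ ≤ ε * (‖finv y‖ + ‖Dinv y‖) := by

  have hη0 : η 0 = 0 := by
    obtain ⟨t, ht, hηt⟩ := hη_bij.surjOn (Set.self_mem_Ici (a := (0:ℝ)))
    rcases eq_or_lt_of_le (Set.mem_Ici.mp ht : (0:ℝ) ≤ t) with h | h
    · have he : η 0 = η t := by rw [← h]
      rw [he, hηt]
    · exfalso
      have h1 := hη_mono Set.self_mem_Ici ht h
      have h2 : η 0 ∈ Set.Ici (0:ℝ) := hη_bij.mapsTo Set.self_mem_Ici
      rw [hηt] at h1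
      exact absurd h1 (not_lt.mpr h2)
  have hfinv0 : finv 0 = 0 := by have h := hfinv_left 0 h0U; rwa [hf0] at h
  have hDinv0 : Dinv 0 = 0 := by have h := hDinv_left 0 h0U; rwa [hD0] at h
  intro ε hε
  obtain ⟨r0, hr0_mem, hr0⟩ := hη_bij.surjOn (show ε/2 ∈ Set.Ici (0:ℝ) by
    simp only [Set.mem_Ici]; linarith)
  have hr0pos : 0 < r0 := by
    rcases eq_or_lt_of_le (Set.mem_Ici.mp hr0_mem : (0:ℝ) ≤ r0) with h | h
    · exfalso; rw [← h, hη0] at hr0; linarith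
    · exact h
  set ε' := min (r0/4) (1/4) with hε'def
  have hε'pos : 0 < ε' := lt_min (by linarith) (by norm_num)
  have hε'le1 : ε' ≤ 1/4 := min_le_right _ _
  have hε'ler : ε' ≤ r0/4 := min_le_left _ _
  obtain ⟨δ₁, hδ₁pos, hδ₁⟩ := hsim ε' hε'pos
  have h0W : (0 : EuclideanSpace ℝ (Fin n)) ∈ W := mem_of_mem_nhds hWnbhd
  have hcontD : ContinuousAt Dinv 0 := hDinv_cont.continuousAt hWnbhd
  have hten := hcontD.tendsto
  rw [hDinv0] at hten
  rw [Metric.tendsto_nhds_nhds] at hten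
  obtain ⟨δ₂, hδ₂pos, hδ₂⟩ := hten δ₁ hδ₁pos
  obtain ⟨δ₃, hδ₃pos, hδ₃⟩ := Metric.mem_nhds_iff.mp (hV.mem_nhds h0V)
  obtain ⟨δ₄, hδ₄pos, hδ₄⟩ := Metric.mem_nhds_iff.mp hWnbhd
  refine ⟨min (min δ₂ δ₃) δ₄, lt_min (lt_min hδ₂pos hδ₃pos) hδ₄pos, ?_⟩
  intro y hy
  rcases eq_or_ne y 0 with rfl | hy0
  · rw [hfinv0, hDinv0]
    simp
  have hynorm : 0 < ‖y‖ := norm_pos_iff.mpr hy0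
  have hyW : y ∈ W := hδ₄ (by
    rw [Metric.mem_ball, dist_zero_right]
    exact lt_of_lt_of_le hy (min_le_right _ _))
  have hyV : y ∈ V := hδ₃ (by
    rw [Metric.mem_ball, dist_zero_right]
    exact lt_of_lt_of_le hy (le_trans (min_le_left _ _) (min_le_right _ _)))
  have hxU : Dinv y ∈ U := by
    rw [hW] at hyW
    obtain ⟨u, huU, huy⟩ := hyW
    have : Dinv y = u := by rw [← huy, hDinv_left u huU]
    rw [this]; exact huU
  have hyW' : y ∈ W := hδ₄ (by
    rw [Metric.mem_ball, dist_zero_right]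
    exact lt_of_lt_of_le hy (min_le_right _ _))
  have hDx : D (Dinv y) = y := hDinv_right y hyW'
  have hxsmall : ‖Dinv y‖ < δ₁ := by
    have h := hδ₂ (show dist y 0 < δ₂ by
      rw [dist_zero_right]
      exact lt_of_lt_of_le hy (le_trans (min_le_left _ _) (min_le_left _ _)))
    rwa [dist_zero_right] at h
  have hsim' := hδ₁ (Dinv y) hxU hxsmall
  rw [hDx] at hsim'
  -- hsim' : ‖f (Dinv y) - y‖ ≤ ε' * (‖f (Dinv y)‖ + ‖y‖)
  have htri : ‖f (Dinv y)‖ ≤ ‖y‖ + ‖f (Dinv y) - y‖ := by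
    have := norm_sub_norm_le (f (Dinv y)) y
    linarith [abs_le.mp (abs_norm_sub_norm_le (f (Dinv y)) y)]
  have hclose : ‖y - f (Dinv y)‖ ≤ r0 * ‖y‖ := by
    rw [norm_sub_rev]
    nlinarith [norm_nonneg (f (Dinv y) - y), norm_nonneg (f (Dinv y))]
  have hfxV : f (Dinv y) ∈ V := by
    rw [← hfUV]; exact ⟨Dinv y, hxU, rfl⟩
  have hqs' := hqs y (f (Dinv y)) 0 hyV hfxV h0V hy0
  rw [hfinv0, hfinv_left (Dinv y) hxU, sub_zero, sub_zero] at hqs'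
  -- hqs' : ‖finv y - Dinv y‖ ≤ η (‖y - f (Dinv y)‖ / ‖y‖) * ‖finv y‖
  set r := ‖y - f (Dinv y)‖ / ‖y‖ with hrdef
  have hrnonneg : (0:ℝ) ≤ r := div_nonneg (norm_nonneg _) (norm_nonneg _)
  have hrle : r ≤ r0 := by
    rw [hrdef, div_le_iff₀ hynorm]
    linarith [hclose]
  have hηr : η r ≤ ε := by
    have := hη_mono.monotoneOn hrnonneg hr0_mem hrle
    rw [hr0] at this
    linarith
  have hηrnn : 0 ≤ η r := hη_bij.mapsTo hrnonneg
  calc ‖finv y - Dinv y‖ ≤ η r * ‖finv y‖ := hqs'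
    _ ≤ ε * ‖finv y‖ := mul_le_mul_of_nonneg_right hηr (norm_nonneg _)
    _ ≤ ε * (‖finv y‖ + ‖Dinv y‖) := by nlinarith [norm_nonneg (Dinv y)]
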